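/- Let P_k denote the path on k vertices and let p ≥ 1 be an integer. If k > 2p, then 2p ≤ χ_l^{p,1}(P_k) ≤ 2p + 1. -/

import Mathlib

open SimpleGraph

/-- A (p,1)-total labelling of `G`: adjacent vertices get distinct colors, edges sharing an
endpoint get distinct colors, and a vertex and an incident edge differ by at least `p`. -/
def IsPOneTotalLabelling {V : Type*} (G : SimpleGraph V) (p : ℕ)
    (cv : V → ℤ) (ce : G.edgeSet → ℤ) : Prop :=
  (∀ u v : V, G.Adj u v → cv u ≠ cv v) ∧
  (∀ e f : G.edgeSet, e ≠ f → (∃ v : V, v ∈ (e : Sym2 V) ∧ v ∈ (f : Sym2 V)) → ce e ≠ ce f) ∧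
  (∀ (v : V) (e : G.edgeSet), v ∈ (e : Sym2 V) → (p : ℤ) ≤ |cv v - ce e|)

/-- χ_{p,1}^T(G): least `k` such that `G` has a (p,1)-total labelling with colors in
`{0, …, k-1}`. -/
noncomputable def pOneTotalChromatic {V : Type*} (G : SimpleGraph V) (p : ℕ) : ℕ :=
  sInf {k : ℕ | ∃ cv ce, IsPOneTotalLabelling G p cv ce ∧
    (∀ v : V, cv v ∈ Set.Ico (0 : ℤ) k) ∧ (∀ e : G.edgeSet, ce e ∈ Set.Ico (0 : ℤ) k)}

/-- λ_p^T(G): least `k` such that `G` has a (p,1)-total labelling with colors in `{0, …, k}`. -/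
noncomputable def pOneTotalNumber {V : Type*} (G : SimpleGraph V) (p : ℕ) : ℕ :=
  sInf {k : ℕ | ∃ cv ce, IsPOneTotalLabelling G p cv ce ∧
    (∀ v : V, cv v ∈ Set.Icc (0 : ℤ) k) ∧ (∀ e : G.edgeSet, ce e ∈ Set.Icc (0 : ℤ) k)}

/-- `G` is `L`-(p,1)-total labelable for list assignment `(Lv, Le)`. -/
def ListPOneTotalLabelable {V : Type*} (G : SimpleGraph V) (p : ℕ)
    (Lv : V → Finset ℤ) (Le : G.edgeSet → Finset ℤ) : Prop :=
  ∃ cv ce, IsPOneTotalLabelling G p cv ce ∧ (∀ v, cv v ∈ Lv v) ∧ (∀ e, ce e ∈ Le e)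

/-- C_{p,1}^T(G): least `k` such that `G` is `L`-(p,1)-total labelable for every list
assignment whose lists all have size `k`. -/
noncomputable def pOneTotalChoosability {V : Type*} (G : SimpleGraph V) (p : ℕ) : ℕ :=
  sInf {k : ℕ | ∀ (Lv : V → Finset ℤ) (Le : G.edgeSet → Finset ℤ),
    (∀ v, (Lv v).card = k) → (∀ e, (Le e).card = k) → ListPOneTotalLabelable G p Lv Le}

/-- An L(p,q)-labelling of `H`. -/
def IsLpqLabelling {V : Type*} (H : SimpleGraph V) (p q : ℕ) (f : V → ℤ) : Prop :=
  (∀ u v : V, H.Adj u v → (p : ℤ) ≤ |f u - f v|) ∧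
  (∀ u v : V, H.dist u v = 2 → (q : ℤ) ≤ |f u - f v|)

/-- χ^{p,q}(H): least `k` such that `H` has an L(p,q)-labelling with colors in `{0, …, k-1}`. -/
noncomputable def LpqChromatic {V : Type*} (H : SimpleGraph V) (p q : ℕ) : ℕ :=
  sInf {k : ℕ | ∃ f, IsLpqLabelling H p q f ∧ ∀ v : V, f v ∈ Set.Ico (0 : ℤ) k}

/-- χ_l^{p,q}(H): least `k` such that from every assignment of lists of size `k`, `H` has an
L(p,q)-labelling choosing each vertex's color from its list. -/
noncomputable def listLpqChromatic {V : Type*} (H : SimpleGraph V) (p q : ℕ) : ℕ :=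
  sInf {k : ℕ | ∀ L : V → Finset ℤ, (∀ v, (L v).card = k) →
    ∃ f, IsLpqLabelling H p q f ∧ ∀ v : V, f v ∈ L v}

/-- The star `K_{1,n}`: vertex `0` is the center, adjacent to the `n` leaves. -/
def starGraph (n : ℕ) : SimpleGraph (Fin (n + 1)) :=
  SimpleGraph.fromRel (fun v w => v = 0 ∨ w = 0)

/-- The incidence graph `S_I(G)`: replace every edge of `G` by a path of length 2. -/
def incidenceGraph {V : Type*} (G : SimpleGraph V) : SimpleGraph (V ⊕ G.edgeSet) where
  Adj x y :=
    (∃ (v : V) (e : G.edgeSet), x = Sum.inl v ∧ y = Sum.inr e ∧ v ∈ (e : Sym2 V)) ∨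
    (∃ (v : V) (e : G.edgeSet), x = Sum.inr e ∧ y = Sum.inl v ∧ v ∈ (e : Sym2 V))
  symm := .mk <| by
    rintro x y (⟨v, e, rfl, rfl, h⟩ | ⟨v, e, rfl, rfl, h⟩)
    · exact Or.inr ⟨v, e, rfl, rfl, h⟩
    · exact Or.inl ⟨v, e, rfl, rfl, h⟩
  loopless := .mk <| by
    rintro x (⟨v, e, h1, h2, -⟩ | ⟨v, e, h1, h2, -⟩) <;> subst h1 <;> simp at h2

/-- `H` is a minor of `G`: there are pairwise disjoint nonempty connected branch sets in `G`,
one for each vertex of `H`, with an edge of `G` between the branch sets of any two vertices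
adjacent in `H`. -/
def IsGraphMinor {W V : Type*} (H : SimpleGraph W) (G : SimpleGraph V) : Prop :=
  ∃ B : W → Set V,
    (∀ w, (B w).Nonempty) ∧
    (∀ w, (G.induce (B w)).Connected) ∧
    (∀ w₁ w₂, w₁ ≠ w₂ → Disjoint (B w₁) (B w₂)) ∧
    (∀ w₁ w₂, H.Adj w₁ w₂ → ∃ v₁ ∈ B w₁, ∃ v₂ ∈ B w₂, G.Adj v₁ v₂)

/-- A graph is outerplanar iff it has neither `K₄` nor `K_{2,3}` as a minor. -/
def Outerplanar {V : Type*} (G : SimpleGraph V) : Prop :=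
  ¬ IsGraphMinor (completeGraph (Fin 4)) G ∧
  ¬ IsGraphMinor (completeBipartiteGraph (Fin 2) (Fin 3)) G

/-! ### Auxiliary lemmas for `listLpqChromatic_pathGraph` -/

/-- In a path graph, vertices at distance 2 have indices differing by exactly 2. -/
lemma path_dist_two_aux {k : ℕ} {u v : Fin k}
    (h : (SimpleGraph.pathGraph k).dist u v = 2) :
    u.val + 2 = v.val ∨ v.val + 2 = u.val := by
  have hne : u ≠ v := by
    rintro rfl
    rw [SimpleGraph.dist_self] at h
    omega
  have hd0 : (SimpleGraph.pathGraph k).dist u v ≠ 0 := by omega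
  obtain ⟨w, hw⟩ := SimpleGraph.exists_walk_of_dist_ne_zero hd0
  rw [h] at hw
  have hnev : u.val ≠ v.val := fun hh => hne (Fin.ext hh)
  cases w with
  | nil => simp at hw
  | cons h1 w1 =>
    cases w1 with
    | nil => simp at hw
    | cons h2 w2 =>
      cases w2 with
      | nil =>
        rw [SimpleGraph.pathGraph_adj] at h1 h2
        omega
      | cons h3 w3 =>
        simp [SimpleGraph.Walk.length_cons] at hw

/-- Greedy construction of an L(p,1)-labelling along a path from lists of size `2p+1`. -/
lemma greedy_path_aux (p : ℕ) (hp : 1 ≤ p) (L : ℕ → Finset ℤ)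
    (hL : ∀ i, (L i).card = 2 * p + 1) (m : ℕ) :
    ∃ f : ℕ → ℤ, (∀ i, i < m → f i ∈ L i) ∧
      (∀ i, i + 1 < m → (p : ℤ) ≤ |f (i + 1) - f i|) ∧
      (∀ i, i + 2 < m → f (i + 2) ≠ f i) := by
  induction m with
  | zero =>
    exact ⟨fun _ => 0, fun i hi => absurd hi (by omega), fun i hi => absurd hi (by omega),
      fun i hi => absurd hi (by omega)⟩
  | succ m ih =>
    obtain ⟨f, h1, h2, h3⟩ := ih
    have hC : (Finset.Icc (f (m - 1) - ((p : ℤ) - 1)) (f (m - 1) + ((p : ℤ) - 1))).card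
        = 2 * p - 1 := by
      rw [Int.card_Icc]; omega
    have hex : ∃ v ∈ L m,
        v ∉ Finset.Icc (f (m - 1) - ((p : ℤ) - 1)) (f (m - 1) + ((p : ℤ) - 1)) ∪ {f (m - 2)} := by
      by_contra hcon
      push_neg at hcon
      have hsub : L m ⊆ _ := fun x hx => hcon x hx
      have hcard := Finset.card_le_card hsub
      have hcard2 := Finset.card_union_le
        (Finset.Icc (f (m - 1) - ((p : ℤ) - 1)) (f (m - 1) + ((p : ℤ) - 1))) ({f (m - 2)} : Finset ℤ)
      rw [hL m] at hcard
      rw [hC, Finset.card_singleton] at hcard2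
      omega
    obtain ⟨v, hv, hvB⟩ := hex
    refine ⟨fun i => if i = m then v else f i, ?_, ?_, ?_⟩
    · intro i hi
      show (if i = m then v else f i) ∈ L i
      by_cases hc : i = m
      · subst hc; simp [hv]
      · rw [if_neg hc]; exact h1 i (by omega)
    · intro i hi
      show (p : ℤ) ≤ |(if i + 1 = m then v else f (i + 1)) - (if i = m then v else f i)|
      by_cases hc : i + 1 = m
      · rw [if_pos hc, if_neg (show i ≠ m by omega)]
        have hx : v ∉ Finset.Icc (f (m - 1) - ((p : ℤ) - 1)) (f (m - 1) + ((p : ℤ) - 1)) :=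
          fun hmm => hvB (Finset.mem_union_left _ hmm)
        rw [Finset.mem_Icc] at hx
        rw [show m - 1 = i from by omega] at hx
        rw [le_abs]
        omega
      · rw [if_neg hc, if_neg (show i ≠ m by omega)]
        exact h2 i (by omega)
    · intro i hi
      show (if i + 2 = m then v else f (i + 2)) ≠ (if i = m then v else f i)
      by_cases hc : i + 2 = m
      · rw [if_pos hc, if_neg (show i ≠ m by omega)]
        have hy : v ∉ ({f (m - 2)} : Finset ℤ) :=
          fun hmm => hvB (Finset.mem_union_right _ hmm)
        rw [Finset.mem_singleton] at hy
        rw [show m - 2 = i from by omega] at hy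
        exact hy
      · rw [if_neg hc, if_neg (show i ≠ m by omega)]
        exact h3 i (by omega)

/-- The offset function for the lower-bound gadget: interval lists
`[ozF p i, ozF p i + 2p - 2]` with offsets `0, p-1, 1, p-2, 2, p-3, …`. -/
def ozF (p : ℕ) (i : ℕ) : ℤ :=
  if i % 2 = 0 then ((i / 2 : ℕ) : ℤ) else (p : ℤ) - 1 - ((i / 2 : ℕ) : ℤ)

lemma ozF_even (p j : ℕ) : ozF p (2 * j) = (j : ℤ) := by
  simp only [ozF]
  rw [if_pos (show 2 * j % 2 = 0 by omega)]
  omega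

lemma ozF_odd (p j : ℕ) : ozF p (2 * j + 1) = (p : ℤ) - 1 - (j : ℤ) := by
  simp only [ozF]
  rw [if_neg (show ¬(2 * j + 1) % 2 = 0 by omega)]
  omega

/-- if k > 2p then 2p ≤ χ_l^{p,1}(P_k) ≤ 2p + 1. -/
theorem listLpqChromatic_pathGraph (p k : ℕ) (hp : 1 ≤ p) (hk : 2 * p < k) :
    2 * p ≤ listLpqChromatic (SimpleGraph.pathGraph k) p 1 ∧
    listLpqChromatic (SimpleGraph.pathGraph k) p 1 ≤ 2 * p + 1 := by
  classical
  have hk0 : 0 < k := by omega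
  -- the set whose infimum is the list chromatic number
  set S : Set ℕ := {n : ℕ | ∀ L : Fin k → Finset ℤ, (∀ v, (L v).card = n) →
    ∃ f, IsLpqLabelling (SimpleGraph.pathGraph k) p 1 f ∧ ∀ v : Fin k, f v ∈ L v} with hS
  have hchrom : listLpqChromatic (SimpleGraph.pathGraph k) p 1 = sInf S := rfl
  -- Upper bound: 2p+1 ∈ S via the greedy labelling
  have hmemU : 2 * p + 1 ∈ S := by
    intro L hcards
    set L' : ℕ → Finset ℤ := fun i => if h : i < k then L ⟨i, h⟩ else L ⟨0, hk0⟩ with hL'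
    have hL'card : ∀ i, (L' i).card = 2 * p + 1 := by
      intro i
      simp only [hL']
      split <;> apply hcards
    obtain ⟨f, h1, h2, h3⟩ := greedy_path_aux p hp L' hL'card k
    refine ⟨fun v => f v.val, ⟨?_, ?_⟩, ?_⟩
    · intro u v huv
      rw [SimpleGraph.pathGraph_adj] at huv
      rcases huv with hc | hc
      · have h2' := h2 u.val (by rw [hc]; exact v.isLt)
        rw [hc] at h2'
        rwa [abs_sub_comm] at h2'
      · have h2' := h2 v.val (by rw [hc]; exact u.isLt)
        rw [hc] at h2'
        exact h2'
    · intro u v hdist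
      rcases path_dist_two_aux hdist with hc | hc
      · have h3' := h3 u.val (by rw [hc]; exact v.isLt)
        rw [hc] at h3'
        exact_mod_cast Int.one_le_abs (sub_ne_zero_of_ne (Ne.symm h3'))
      · have h3' := h3 v.val (by rw [hc]; exact u.isLt)
        rw [hc] at h3'
        exact_mod_cast Int.one_le_abs (sub_ne_zero_of_ne h3')
    · intro v
      have hmem := h1 v.val v.isLt
      simp only [hL'] at hmem
      rw [dif_pos v.isLt] at hmem
      simpa using hmem
  -- Lower bound: every element of S is at least 2p
  have hlow : ∀ n ∈ S, 2 * p ≤ n := by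
    intro n hn
    by_contra hlt
    push_neg at hlt
    -- choose lists of size n inside the gadget intervals
    have hsub : ∀ i : Fin k, ∃ s ⊆ Finset.Icc (ozF p i.val) (ozF p i.val + (2 * (p : ℤ) - 2)),
        s.card = n := by
      intro i
      apply Finset.exists_subset_card_eq
      rw [Int.card_Icc]
      omega
    choose Lc hLsub hLcard using hsub
    obtain ⟨f, hlab, hmem⟩ := hn Lc hLcard
    have hadj := hlab.1
    -- work with a total function on ℕ
    set F : ℕ → ℤ := fun i => if h : i < k then f ⟨i, h⟩ else 0 with hF
    have hbound : ∀ i, i < k → ozF p i ≤ F i ∧ F i ≤ ozF p i + (2 * (p : ℤ) - 2) := by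
      intro i hi
      have h1 := hLsub ⟨i, hi⟩ (hmem ⟨i, hi⟩)
      rw [Finset.mem_Icc] at h1
      simp only [hF]
      rw [dif_pos hi]
      exact h1
    have hstep : ∀ i, i + 1 < k → (p : ℤ) ≤ |F (i + 1) - F i| := by
      intro i hi
      have hi0 : i < k := by omega
      have hadj' : (SimpleGraph.pathGraph k).Adj ⟨i, hi0⟩ ⟨i + 1, hi⟩ :=
        SimpleGraph.pathGraph_adj.mpr (Or.inl rfl)
      have h2 := hadj _ _ hadj'
      simp only [hF]
      rw [dif_pos hi, dif_pos hi0, abs_sub_comm]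
      exact h2
    -- window-shrinking induction: F(2j) ∈ [j, 2p-2-j]
    have key : ∀ j, j < p → (j : ℤ) ≤ F (2 * j) ∧ F (2 * j) ≤ 2 * (p : ℤ) - 2 - (j : ℤ) := by
      intro j
      induction j with
      | zero =>
        intro _
        have hb := hbound (2 * 0) (by omega)
        rw [ozF_even] at hb
        omega
      | succ j ih =>
        intro hjp
        have hj := ih (by omega)
        have hbb := hbound (2 * j + 1) (by omega)
        rw [ozF_odd] at hbb
        have hcc := hbound (2 * (j + 1)) (by omega)
        rw [ozF_even] at hcc
        have hs1 := hstep (2 * j) (by omega)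
        have hs2 := hstep (2 * j + 1) (by omega)
        rw [show 2 * j + 1 + 1 = 2 * (j + 1) from by omega] at hs2
        rw [le_abs] at hs1 hs2
        omega
    -- final contradiction at vertex 2(p-1)+1
    have hfin := key (p - 1) (by omega)
    have hbb := hbound (2 * (p - 1) + 1) (by omega)
    rw [ozF_odd] at hbb
    have hs := hstep (2 * (p - 1)) (by omega)
    rw [le_abs] at hs
    omega
  rw [hchrom]
  exact ⟨hlow _ (Nat.sInf_mem ⟨_, hmemU⟩), Nat.sInf_le hmemU⟩
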